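/- arXiv:1907.07256 — 3 statements merged into one kernel-verified Lean document; each statement's English description precedes it below -/
import Mathlib

section
/- Let A be a supercommutative superalgebra and let p, q be natural numbers. Let X = [[A,B],[C,D]] be an even invertible supermatrix of format p|q over A. Then its supertranspose X^{st} = [[Aᵗ, Cᵗ],[−Bᵗ, Dᵗ]] is again an even invertible supermatrix and Ber(X^{st}) = Ber(X); explicitly, det(Aᵗ + Cᵗ·(Dᵗ)⁻¹·Bᵗ)·det(Dᵗ)⁻¹ = det(A − B·D⁻¹·C)·det(D)⁻¹. -/
open Matrix

/-- A supercommutative superalgebra structure on a ring `A`: a `ℤ/2`-grading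
`A = A₀ ⊕ A₁` (with `A₀` a subring and `A₁` an additive subgroup) satisfying the
sign rule `a * b = (-1)^{|a||b|} * (b * a)` for homogeneous elements `a`, `b`. -/
structure SuperComm (A : Type*) [Ring A] where
  even : Subring A
  odd : AddSubgroup A
  decompose : ∀ a : A, ∃ a₀ ∈ even, ∃ a₁ ∈ odd, a = a₀ + a₁
  indep : ∀ a : A, a ∈ even → a ∈ odd → a = 0
  odd_mul_odd : ∀ a ∈ odd, ∀ b ∈ odd, a * b ∈ even
  even_mul_odd : ∀ a ∈ even, ∀ b ∈ odd, a * b ∈ odd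
  odd_mul_even : ∀ a ∈ odd, ∀ b ∈ even, a * b ∈ odd
  even_comm : ∀ a ∈ even, ∀ b ∈ even, a * b = b * a
  even_odd_comm : ∀ a ∈ even, ∀ b ∈ odd, a * b = b * a
  odd_anticomm : ∀ a ∈ odd, ∀ b ∈ odd, a * b = -(b * a)

/-- The even part `A₀` is a commutative ring. -/
instance SuperComm.instCommRingEven {A : Type*} [Ring A] (S : SuperComm A) :
    CommRing S.even :=
  { (inferInstance : Ring S.even) with
    mul_comm := fun a b => Subtype.ext (S.even_comm a.1 a.2 b.1 b.2) }

/-- Restriction of a matrix all of whose entries lie in the even part `A₀` to a matrix over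
the commutative ring `A₀` (entries not lying in `A₀` are sent to the junk value `0`). -/
noncomputable def SuperComm.res {A : Type*} [Ring A] (S : SuperComm A) {n m : Type*}
    (M : Matrix n m A) : Matrix n m S.even :=
  Matrix.of fun i j =>
    letI := Classical.propDecidable (M i j ∈ S.even)
    if h : M i j ∈ S.even then (⟨M i j, h⟩ : S.even) else 0

/-- The Berezinian of a supermatrix `X = [[A,B],[C,D]]` of format `p|q`:
`Ber X = det (A - B * D⁻¹ * C) * (det D)⁻¹`, an element of the even part `A₀`. -/
noncomputable def SuperComm.ber {A : Type*} [Ring A] (S : SuperComm A) {p q : ℕ}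
    (X : Matrix (Fin p ⊕ Fin q) (Fin p ⊕ Fin q) A) : S.even :=
  (S.res (X.toBlocks₁₁ - X.toBlocks₁₂ * Ring.inverse X.toBlocks₂₂ * X.toBlocks₂₁)).det *
    Ring.inverse ((S.res X.toBlocks₂₂).det)

/-! Auxiliary lemmas -/

namespace SuperComm

variable {A : Type*} [Ring A] (S : SuperComm A)

/-- even elements are central. -/
lemma even_central {a : A} (ha : a ∈ S.even) (b : A) : a * b = b * a := by
  obtain ⟨b₀, hb₀, b₁, hb₁, rfl⟩ := S.decompose b
  rw [mul_add, add_mul, S.even_comm a ha b₀ hb₀, S.even_odd_comm a ha b₁ hb₁]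

/-- splitting: even + odd = even implies the odd part is zero. -/
lemma split_zero {e o c : A} (he : e ∈ S.even) (ho : o ∈ S.odd) (hc : c ∈ S.even)
    (h : e + o = c) : e = c ∧ o = 0 := by
  have ho' : o ∈ S.even := by
    have : o = c - e := by rw [← h]; abel
    rw [this]; exact S.even.sub_mem hc he
  have := S.indep o ho' ho
  constructor
  · rw [← h, this, add_zero]
  · exact this

/-- even part of an element. -/
noncomputable def evP (a : A) : A := (S.decompose a).choose

lemma evP_mem (a : A) : S.evP a ∈ S.even := (S.decompose a).choose_spec.1

lemma odP_mem (a : A) : a - S.evP a ∈ S.odd := by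
  obtain ⟨h₀, a₁, h₁, heq⟩ := (S.decompose a).choose_spec
  rw [show S.evP a = (S.decompose a).choose from rfl, sub_eq_of_eq_add' heq]; exact h₁

section Matrices

variable {n m k : Type*}

/-- even part of a matrix, entrywise. -/
noncomputable def evM (M : Matrix n m A) : Matrix n m A := of fun i j => S.evP (M i j)

/-- odd part of a matrix, entrywise. -/
noncomputable def odM (M : Matrix n m A) : Matrix n m A := M - S.evM M

lemma evM_mem (M : Matrix n m A) : ∀ i j, S.evM M i j ∈ S.even := fun i j => S.evP_mem _

lemma odM_mem (M : Matrix n m A) : ∀ i j, S.odM M i j ∈ S.odd := fun i j => S.odP_mem _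

lemma evM_add_odM (M : Matrix n m A) : S.evM M + S.odM M = M := by
  unfold odM; abel

variable [Fintype m]

lemma mul_mem_ee {M : Matrix n m A} {N : Matrix m k A} (hM : ∀ i j, M i j ∈ S.even)
    (hN : ∀ i j, N i j ∈ S.even) : ∀ i j, (M * N) i j ∈ S.even := fun i j => by
  rw [Matrix.mul_apply]
  exact Subring.sum_mem _ fun l _ => S.even.mul_mem (hM i l) (hN l j)

lemma mul_mem_oo {M : Matrix n m A} {N : Matrix m k A} (hM : ∀ i j, M i j ∈ S.odd)
    (hN : ∀ i j, N i j ∈ S.odd) : ∀ i j, (M * N) i j ∈ S.even := fun i j => by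
  rw [Matrix.mul_apply]
  exact Subring.sum_mem _ fun l _ => S.odd_mul_odd _ (hM i l) _ (hN l j)

lemma mul_mem_eo {M : Matrix n m A} {N : Matrix m k A} (hM : ∀ i j, M i j ∈ S.even)
    (hN : ∀ i j, N i j ∈ S.odd) : ∀ i j, (M * N) i j ∈ S.odd := fun i j => by
  rw [Matrix.mul_apply]
  exact AddSubgroup.sum_mem _ fun l _ => S.even_mul_odd _ (hM i l) _ (hN l j)

lemma mul_mem_oe {M : Matrix n m A} {N : Matrix m k A} (hM : ∀ i j, M i j ∈ S.odd)
    (hN : ∀ i j, N i j ∈ S.even) : ∀ i j, (M * N) i j ∈ S.odd := fun i j => by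
  rw [Matrix.mul_apply]
  exact AddSubgroup.sum_mem _ fun l _ => S.odd_mul_even _ (hM i l) _ (hN l j)

/-- matrix splitting. -/
lemma msplit {M N C : Matrix n k A} (hM : ∀ i j, M i j ∈ S.even)
    (hN : ∀ i j, N i j ∈ S.odd) (hC : ∀ i j, C i j ∈ S.even) (h : M + N = C) :
    M = C ∧ N = 0 := by
  have h' : ∀ i j, M i j + N i j = C i j := fun i j => by
    have := congrFun (congrFun h i) j
    simpa using this
  constructor <;> ext i j
  · exact (S.split_zero (hM i j) (hN i j) (hC i j) (h' i j)).1
  · simpa using (S.split_zero (hM i j) (hN i j) (hC i j) (h' i j)).2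

lemma one_mem_even [DecidableEq n] : ∀ i j, (1 : Matrix n n A) i j ∈ S.even := fun i j => by
  rw [Matrix.one_apply]
  split <;> simp [Subring.one_mem, Subring.zero_mem]

/-- transpose of product under entrywise commutation. -/
lemma transpose_mul_comm {M : Matrix n m A} {N : Matrix m k A}
    (h : ∀ i j a b, M i j * N a b = N a b * M i j) : (M * N)ᵀ = Nᵀ * Mᵀ := by
  ext i j
  simp only [transpose_apply, Matrix.mul_apply]
  exact Finset.sum_congr rfl fun l _ => h j l l i

/-- transpose of product under entrywise anticommutation. -/
lemma transpose_mul_anticomm {M : Matrix n m A} {N : Matrix m k A}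
    (h : ∀ i j a b, M i j * N a b = -(N a b * M i j)) : (M * N)ᵀ = -(Nᵀ * Mᵀ) := by
  ext i j
  simp only [transpose_apply, Matrix.mul_apply, Matrix.neg_apply]
  rw [← Finset.sum_neg_distrib]
  exact Finset.sum_congr rfl fun l _ => by rw [h j l l i]

/-- uniqueness of two-sided inverses for Ring.inverse. -/
lemma ring_inverse_eq {R : Type*} [MonoidWithZero R] {M W : R}
    (h1 : M * W = 1) (h2 : W * M = 1) : Ring.inverse M = W := by
  have hu : IsUnit M := ⟨⟨M, W, h1, h2⟩, rfl⟩
  calc Ring.inverse M = Ring.inverse M * (M * W) := by rw [h1, mul_one]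
    _ = Ring.inverse M * M * W := by rw [mul_assoc]
    _ = W := by rw [Ring.inverse_mul_cancel _ hu, one_mul]

section Sq

variable {n : Type*} [Fintype n] [DecidableEq n]

/-- Ring.inverse of an even matrix has even entries. -/
lemma inv_even {D : Matrix n n A} (hD : ∀ i j, D i j ∈ S.even) :
    ∀ i j, Ring.inverse D i j ∈ S.even := by
  by_cases h : IsUnit D
  · have hDW : D * Ring.inverse D = 1 := Ring.mul_inverse_cancel D h
    have hWD : Ring.inverse D * D = 1 := Ring.inverse_mul_cancel D h
    set W := Ring.inverse D with hW
    -- split D * W = 1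
    have hsum : D * S.evM W + D * S.odM W = 1 := by
      rw [← mul_add, S.evM_add_odM, hDW]
    have h1 := S.msplit (S.mul_mem_ee hD (S.evM_mem W)) (S.mul_mem_eo hD (S.odM_mem W))
      (S.one_mem_even) hsum
    -- split W * D = 1
    have hsum' : S.evM W * D + S.odM W * D = 1 := by
      rw [← add_mul, S.evM_add_odM, hWD]
    have h2 := S.msplit (S.mul_mem_ee (S.evM_mem W) hD) (S.mul_mem_oe (S.odM_mem W) hD)
      (S.one_mem_even) hsum'
    have hWeq : W = S.evM W := by
      calc W = W * (D * S.evM W) := by rw [h1.1, mul_one]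
        _ = W * D * S.evM W := by rw [mul_assoc]
        _ = S.evM W := by rw [hWD, one_mul]
    intro i j
    rw [show W i j = S.evM W i j from congrFun (congrFun hWeq i) j]
    exact S.evM_mem W i j
  · rw [Ring.inverse_non_unit _ h]
    intro i j
    simp only [Matrix.zero_apply]
    exact S.even.zero_mem

/-- transpose commutes with Ring.inverse for even matrices. -/
lemma inv_transpose {D : Matrix n n A} (hD : ∀ i j, D i j ∈ S.even) :
    Ring.inverse Dᵀ = (Ring.inverse D)ᵀ := by
  by_cases h : IsUnit D
  · have hDW : D * Ring.inverse D = 1 := Ring.mul_inverse_cancel D h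
    have hWD : Ring.inverse D * D = 1 := Ring.inverse_mul_cancel D h
    have hWe := S.inv_even hD
    have hcomm : ∀ i j a b, Ring.inverse D i j * D a b = D a b * Ring.inverse D i j :=
      fun i j a b => S.even_central (hWe i j) _
    have hcomm' : ∀ i j a b, D i j * Ring.inverse D a b = Ring.inverse D a b * D i j :=
      fun i j a b => S.even_central (hD i j) _
    have h1 : Dᵀ * (Ring.inverse D)ᵀ = 1 := by
      rw [← transpose_mul_comm hcomm, hWD, transpose_one]
    have h2 : (Ring.inverse D)ᵀ * Dᵀ = 1 := by
      rw [← transpose_mul_comm hcomm', hDW, transpose_one]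
    exact ring_inverse_eq h1 h2
  · have h' : ¬ IsUnit Dᵀ := by
      intro hT
      apply h
      have hDe : ∀ i j, Dᵀ i j ∈ S.even := fun i j => hD j i
      have hVe := S.inv_even hDe
      have hDV : Dᵀ * Ring.inverse Dᵀ = 1 := Ring.mul_inverse_cancel _ hT
      have hVD : Ring.inverse Dᵀ * Dᵀ = 1 := Ring.inverse_mul_cancel _ hT
      have hcomm : ∀ i j a b, Ring.inverse Dᵀ i j * Dᵀ a b = Dᵀ a b * Ring.inverse Dᵀ i j :=
        fun i j a b => S.even_central (hVe i j) _
      have hcomm' : ∀ i j a b, Dᵀ i j * Ring.inverse Dᵀ a b = Ring.inverse Dᵀ a b * Dᵀ i j :=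
        fun i j a b => S.even_central (hDe i j) _
      have h1 : D * (Ring.inverse Dᵀ)ᵀ = 1 := by
        have := transpose_mul_comm hcomm
        rw [hVD, transpose_one, transpose_transpose] at this
        exact this.symm
      have h2 : (Ring.inverse Dᵀ)ᵀ * D = 1 := by
        have := transpose_mul_comm hcomm'
        rw [hDV, transpose_one, transpose_transpose] at this
        exact this.symm
      exact ⟨⟨D, (Ring.inverse Dᵀ)ᵀ, h1, h2⟩, rfl⟩
    rw [Ring.inverse_non_unit _ h, Ring.inverse_non_unit _ h', transpose_zero]

end Sq

lemma res_transpose {n m : Type*} (M : Matrix n m A) : S.res Mᵀ = (S.res M)ᵀ := by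
  ext i j
  rfl

section Splits

variable {ι κ μ ν : Type*} [Fintype ι] [Fintype κ]

lemma split_mul_left {M : Matrix μ ι A} {N : Matrix μ κ A} {U : Matrix ι ν A}
    {V : Matrix κ ν A} {C : Matrix μ ν A} (hM : ∀ i j, M i j ∈ S.even)
    (hN : ∀ i j, N i j ∈ S.odd) (hC : ∀ i j, C i j ∈ S.even)
    (h : M * U + N * V = C) :
    M * S.evM U + N * S.odM V = C ∧ M * S.odM U + N * S.evM V = 0 := by
  have hre : (M * S.evM U + N * S.odM V) + (M * S.odM U + N * S.evM V) = C := by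
    rw [← h]
    conv_rhs => rw [← S.evM_add_odM U, ← S.evM_add_odM V]
    rw [Matrix.mul_add, Matrix.mul_add]
    abel
  refine S.msplit ?_ ?_ hC hre
  · intro i j
    rw [Matrix.add_apply]
    exact S.even.add_mem (S.mul_mem_ee hM (S.evM_mem U) i j) (S.mul_mem_oo hN (S.odM_mem V) i j)
  · intro i j
    rw [Matrix.add_apply]
    exact S.odd.add_mem (S.mul_mem_eo hM (S.odM_mem U) i j) (S.mul_mem_oe hN (S.evM_mem V) i j)

lemma split_mul_right {M : Matrix ι μ A} {N : Matrix κ μ A} {U : Matrix ν ι A}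
    {V : Matrix ν κ A} {C : Matrix ν μ A} (hM : ∀ i j, M i j ∈ S.even)
    (hN : ∀ i j, N i j ∈ S.odd) (hC : ∀ i j, C i j ∈ S.even)
    (h : U * M + V * N = C) :
    S.evM U * M + S.odM V * N = C ∧ S.odM U * M + S.evM V * N = 0 := by
  have hre : (S.evM U * M + S.odM V * N) + (S.odM U * M + S.evM V * N) = C := by
    rw [← h]
    conv_rhs => rw [← S.evM_add_odM U, ← S.evM_add_odM V]
    rw [Matrix.add_mul, Matrix.add_mul]
    abel
  refine S.msplit ?_ ?_ hC hre
  · intro i j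
    rw [Matrix.add_apply]
    exact S.even.add_mem (S.mul_mem_ee (S.evM_mem U) hM i j) (S.mul_mem_oo (S.odM_mem V) hN i j)
  · intro i j
    rw [Matrix.add_apply]
    exact S.odd.add_mem (S.mul_mem_oe (S.odM_mem U) hM i j) (S.mul_mem_eo (S.evM_mem V) hN i j)

end Splits

section St

variable {ι κ : Type*} [Fintype ι] [Fintype κ]

lemma st_mul {P P' : Matrix ι ι A} {Q Q' : Matrix ι κ A} {R R' : Matrix κ ι A}
    {D D' : Matrix κ κ A}
    (hP : ∀ i j, P i j ∈ S.even) (hD : ∀ i j, D i j ∈ S.even)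
    (hQ : ∀ i j, Q i j ∈ S.odd) (hR : ∀ i j, R i j ∈ S.odd)
    (hP' : ∀ i j, P' i j ∈ S.even) (hD' : ∀ i j, D' i j ∈ S.even)
    (hQ' : ∀ i j, Q' i j ∈ S.odd) (hR' : ∀ i j, R' i j ∈ S.odd) :
    fromBlocks P'ᵀ R'ᵀ (-Q'ᵀ) D'ᵀ * fromBlocks Pᵀ Rᵀ (-Qᵀ) Dᵀ =
      fromBlocks (P * P' + Q * R')ᵀ (R * P' + D * R')ᵀ
        (-(P * Q' + Q * D')ᵀ) (R * Q' + D * D')ᵀ := by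
  rw [fromBlocks_multiply]
  have tPP' : (P * P')ᵀ = P'ᵀ * Pᵀ :=
    transpose_mul_comm (fun i j a b => S.even_central (hP i j) _)
  have tQR' : (Q * R')ᵀ = -(R'ᵀ * Qᵀ) :=
    transpose_mul_anticomm (fun i j a b => S.odd_anticomm _ (hQ i j) _ (hR' a b))
  have tRP' : (R * P')ᵀ = P'ᵀ * Rᵀ :=
    transpose_mul_comm (fun i j a b => (S.even_central (hP' a b) _).symm)
  have tDR' : (D * R')ᵀ = R'ᵀ * Dᵀ :=
    transpose_mul_comm (fun i j a b => S.even_central (hD i j) _)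
  have tPQ' : (P * Q')ᵀ = Q'ᵀ * Pᵀ :=
    transpose_mul_comm (fun i j a b => S.even_central (hP i j) _)
  have tQD' : (Q * D')ᵀ = D'ᵀ * Qᵀ :=
    transpose_mul_comm (fun i j a b => (S.even_central (hD' a b) _).symm)
  have tRQ' : (R * Q')ᵀ = -(Q'ᵀ * Rᵀ) :=
    transpose_mul_anticomm (fun i j a b => S.odd_anticomm _ (hR i j) _ (hQ' a b))
  have tDD' : (D * D')ᵀ = D'ᵀ * Dᵀ :=
    transpose_mul_comm (fun i j a b => S.even_central (hD i j) _)
  simp only [transpose_add, tPP', tQR', tRP', tDR', tPQ', tQD', tRQ', tDD']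
  rw [Matrix.fromBlocks_inj]
  refine ⟨?_, ?_, ?_, ?_⟩ <;> simp only [Matrix.mul_neg, Matrix.neg_mul, neg_add]

end St

end Matrices

end SuperComm

/-- for an even invertible supermatrix `X = [[P,Q],[R,D]]` of format `p|q`,
its supertranspose `X^st = [[Pᵀ, Rᵀ],[-Qᵀ, Dᵀ]]` is again an even invertible supermatrix
with `Ber (X^st) = Ber X`; explicitly,
`det (Pᵀ + Rᵀ * (Dᵀ)⁻¹ * Qᵀ) * (det Dᵀ)⁻¹ = det (P - Q * D⁻¹ * R) * (det D)⁻¹`. -/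
theorem berezinian_superTranspose {A : Type*} [Ring A] (S : SuperComm A) (p q : ℕ)
    (P : Matrix (Fin p) (Fin p) A) (Q : Matrix (Fin p) (Fin q) A)
    (R : Matrix (Fin q) (Fin p) A) (D : Matrix (Fin q) (Fin q) A)
    (hP : ∀ i j, P i j ∈ S.even) (hD : ∀ i j, D i j ∈ S.even)
    (hQ : ∀ i j, Q i j ∈ S.odd) (hR : ∀ i j, R i j ∈ S.odd)
    (hXu : IsUnit (Matrix.fromBlocks P Q R D)) :
    (∀ i j, Pᵀ i j ∈ S.even) ∧ (∀ i j, Dᵀ i j ∈ S.even) ∧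
    (∀ i j, Rᵀ i j ∈ S.odd) ∧ (∀ i j, (-Qᵀ) i j ∈ S.odd) ∧
    IsUnit (Matrix.fromBlocks Pᵀ Rᵀ (-Qᵀ) Dᵀ) ∧
    S.ber (Matrix.fromBlocks Pᵀ Rᵀ (-Qᵀ) Dᵀ) = S.ber (Matrix.fromBlocks P Q R D) ∧
    (S.res (Pᵀ + Rᵀ * Ring.inverse Dᵀ * Qᵀ)).det * Ring.inverse ((S.res Dᵀ).det) =
      (S.res (P - Q * Ring.inverse D * R)).det * Ring.inverse ((S.res D).det) := by
  classical
  -- parities of the supertranspose blocks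
  have hPe : ∀ i j, Pᵀ i j ∈ S.even := fun i j => hP j i
  have hDe : ∀ i j, Dᵀ i j ∈ S.even := fun i j => hD j i
  have hRo : ∀ i j, Rᵀ i j ∈ S.odd := fun i j => hR j i
  have hQo : ∀ i j, (-Qᵀ) i j ∈ S.odd := fun i j => by
    rw [Matrix.neg_apply]; exact S.odd.neg_mem (hQ j i)
  -- the key matrix identity
  have hWe := S.inv_even hD
  have t1 : (Q * Ring.inverse D)ᵀ = (Ring.inverse D)ᵀ * Qᵀ :=
    SuperComm.transpose_mul_comm (fun i j a b => (SuperComm.even_central S (hWe a b) _).symm)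
  have hQW_odd : ∀ i j, (Q * Ring.inverse D) i j ∈ S.odd := S.mul_mem_oe hQ hWe
  have t2 : (Q * Ring.inverse D * R)ᵀ = -(Rᵀ * (Q * Ring.inverse D)ᵀ) :=
    SuperComm.transpose_mul_anticomm
      (fun i j a b => S.odd_anticomm _ (hQW_odd i j) _ (hR a b))
  have key : Pᵀ + Rᵀ * Ring.inverse Dᵀ * Qᵀ = (P - Q * Ring.inverse D * R)ᵀ := by
    rw [transpose_sub, t2, t1, sub_neg_eq_add, ← Matrix.mul_assoc, S.inv_transpose hD]
  have explicit :
      (S.res (Pᵀ + Rᵀ * Ring.inverse Dᵀ * Qᵀ)).det * Ring.inverse ((S.res Dᵀ).det) =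
      (S.res (P - Q * Ring.inverse D * R)).det * Ring.inverse ((S.res D).det) := by
    rw [key, S.res_transpose, Matrix.det_transpose, S.res_transpose, Matrix.det_transpose]
  -- the even inverse of X
  obtain ⟨u, hu⟩ := hXu
  set Y := Units.val u⁻¹ with hYdef
  have hXY : Matrix.fromBlocks P Q R D * Y = 1 := by rw [← hu, hYdef]; exact u.mul_inv
  have hYX : Y * Matrix.fromBlocks P Q R D = 1 := by rw [← hu, hYdef]; exact u.inv_mul
  have h0e : ∀ {μ ν : Type} [Fintype μ] [Fintype ν],
      ∀ (i : μ) (j : ν), (0 : Matrix μ ν A) i j ∈ S.even := by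
    intro μ ν _ _ i j
    rw [Matrix.zero_apply]; exact S.even.zero_mem
  have hXYb : Matrix.fromBlocks P Q R D *
      Matrix.fromBlocks Y.toBlocks₁₁ Y.toBlocks₁₂ Y.toBlocks₂₁ Y.toBlocks₂₂ = 1 := by
    rw [fromBlocks_toBlocks]; exact hXY
  have hYXb : Matrix.fromBlocks Y.toBlocks₁₁ Y.toBlocks₁₂ Y.toBlocks₂₁ Y.toBlocks₂₂ *
      Matrix.fromBlocks P Q R D = 1 := by
    rw [fromBlocks_toBlocks]; exact hYX
  rw [fromBlocks_multiply, ← fromBlocks_one, Matrix.fromBlocks_inj] at hXYb hYXb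
  obtain ⟨e11, e12, e21, e22⟩ := hXYb
  obtain ⟨f11, f12, f21, f22⟩ := hYXb
  -- split the inverse into homogeneous blocks
  have s11 := S.split_mul_left hP hQ S.one_mem_even e11
  have s12 := S.split_mul_left hP hQ h0e e12
  have s21 := S.split_mul_left hD hR h0e (by rw [add_comm] at e21; exact e21)
  have s22 := S.split_mul_left hD hR S.one_mem_even (by rw [add_comm] at e22; exact e22)
  have f11' := S.split_mul_right hP hR S.one_mem_even f11
  have f12' := S.split_mul_right hD hQ h0e (by rw [add_comm] at f12; exact f12)
  have f21' := S.split_mul_right hP hR h0e f21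
  have f22' := S.split_mul_right hD hQ S.one_mem_even (by rw [add_comm] at f22; exact f22)
  -- the even inverse Z
  set Z11 := S.evM Y.toBlocks₁₁ with hZ11
  set Z12 := S.odM Y.toBlocks₁₂ with hZ12
  set Z21 := S.odM Y.toBlocks₂₁ with hZ21
  set Z22 := S.evM Y.toBlocks₂₂ with hZ22
  have hZ11e : ∀ i j, Z11 i j ∈ S.even := S.evM_mem _
  have hZ22e : ∀ i j, Z22 i j ∈ S.even := S.evM_mem _
  have hZ12o : ∀ i j, Z12 i j ∈ S.odd := S.odM_mem _
  have hZ21o : ∀ i j, Z21 i j ∈ S.odd := S.odM_mem _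
  -- the supertranspose is invertible
  have m1 := S.st_mul hP hD hQ hR hZ11e hZ22e hZ12o hZ21o
  have m2 := S.st_mul hZ11e hZ22e hZ12o hZ21o hP hD hQ hR
  have hZX1 : Matrix.fromBlocks Z11ᵀ Z21ᵀ (-Z12ᵀ) Z22ᵀ *
      Matrix.fromBlocks Pᵀ Rᵀ (-Qᵀ) Dᵀ = 1 := by
    rw [m1, s11.1, show R * Z11 + D * Z21 = 0 by rw [add_comm]; exact s21.2,
      s12.2, show R * Z12 + D * Z22 = 1 by rw [add_comm]; exact s22.1]
    simp [fromBlocks_one]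
  have hXZ1 : Matrix.fromBlocks Pᵀ Rᵀ (-Qᵀ) Dᵀ *
      Matrix.fromBlocks Z11ᵀ Z21ᵀ (-Z12ᵀ) Z22ᵀ = 1 := by
    rw [m2, f11'.1, f21'.2, show Z11 * Q + Z12 * D = 0 by rw [add_comm]; exact f12'.2,
      show Z21 * Q + Z22 * D = 1 by rw [add_comm]; exact f22'.1]
    simp [fromBlocks_one]
  have hstu : IsUnit (Matrix.fromBlocks Pᵀ Rᵀ (-Qᵀ) Dᵀ) :=
    ⟨⟨Matrix.fromBlocks Pᵀ Rᵀ (-Qᵀ) Dᵀ, Matrix.fromBlocks Z11ᵀ Z21ᵀ (-Z12ᵀ) Z22ᵀ,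
      hXZ1, hZX1⟩, rfl⟩
  refine ⟨hPe, hDe, hRo, hQo, hstu, ?_, explicit⟩
  simp only [SuperComm.ber, toBlocks_fromBlocks₁₁, toBlocks_fromBlocks₁₂,
    toBlocks_fromBlocks₂₁, toBlocks_fromBlocks₂₂, Matrix.mul_neg, sub_neg_eq_add]
  exact explicit
end

section
/- Let A be a supercommutative superalgebra over a field of characteristic zero. Let f, g ∈ A⟦x⟧ be formal power series all of whose coefficients lie in the even part A₀, and let λ, ψ ∈ A⟦x⟧ be formal power series all of whose coefficients lie in the odd part A₁. Assume the superconformality conditions: (i) λ = f·g·ψ, and (ii) f·g² + λ·ψ·g = x·f′ − x·f·ψ·ψ′, where (·)′ denotes the formal derivative. Assume further that the constant coefficient of f vanishes, f(0) = 0, and that the coefficient of x in f, denoted f′(0), is an invertible element of A. Then the constant coefficient g(0) of g satisfies g(0)² = 1. -/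
/-- The formal derivative of a power series over a (possibly noncommutative) ring. -/
noncomputable def psDeriv {A : Type*} [Ring A] (f : PowerSeries A) : PowerSeries A :=
  PowerSeries.mk fun n => ((n : A) + 1) * PowerSeries.coeff (n + 1) f

/-- let `A` be a supercommutative superalgebra over a field of characteristic
zero, `f, g ∈ A⟦x⟧` with all coefficients even and `λ, ψ ∈ A⟦x⟧` with all coefficients
odd. Assume the superconformality conditions (i) `λ = f * g * ψ` and
(ii) `f * g² + λ * ψ * g = x * f′ - x * f * ψ * ψ′`, that `f(0) = 0`, and that `f′(0)`
(the coefficient of `x` in `f`) is invertible. Then `g(0)² = 1`. -/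
theorem superconformal_g_sq_eq_one {K A : Type*} [Field K] [CharZero K] [Ring A]
    [Algebra K A] (S : SuperComm A) (f g lam ψ : PowerSeries A)
    (hf : ∀ n : ℕ, PowerSeries.coeff n f ∈ S.even)
    (hg : ∀ n : ℕ, PowerSeries.coeff n g ∈ S.even)
    (hlam : ∀ n : ℕ, PowerSeries.coeff n lam ∈ S.odd)
    (hψ : ∀ n : ℕ, PowerSeries.coeff n ψ ∈ S.odd)
    (h1 : lam = f * g * ψ)
    (h2 : f * g ^ 2 + lam * ψ * g =
      PowerSeries.X * psDeriv f - PowerSeries.X * f * ψ * psDeriv ψ)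
    (hf0 : PowerSeries.coeff 0 f = 0)
    (hf1 : IsUnit (PowerSeries.coeff 1 f)) :
    PowerSeries.coeff 0 g ^ 2 = 1 := by

  set c := @PowerSeries.coeff A _ with hc
  -- 2 is a unit in A
  have h2unit : IsUnit (2 : A) := by
    have h2 : (2 : A) = algebraMap K A 2 := (map_ofNat (algebraMap K A) 2).symm
    rw [h2]
    exact (isUnit_of_invertible (2:K)).map (algebraMap K A)
  -- ψ₀² = 0
  have hψ0 : c 0 ψ * c 0 ψ = 0 := by
    have h := S.odd_anticomm _ (hψ 0) _ (hψ 0)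
    have h2x : (2:A) * (c 0 ψ * c 0 ψ) = 0 := by
      rw [two_mul]
      exact add_eq_zero_iff_eq_neg.mpr h
    obtain ⟨u, hu⟩ := h2unit
    calc c 0 ψ * c 0 ψ = ↑u⁻¹ * (↑u * (c 0 ψ * c 0 ψ)) := by
          rw [← mul_assoc, Units.inv_mul, one_mul]
      _ = 0 := by rw [hu, h2x, mul_zero]
  have hmul1 : ∀ p q : PowerSeries A, c 1 (p * q) = c 0 p * c 1 q + c 1 p * c 0 q := by
    intro p q
    rw [hc, PowerSeries.coeff_mul, Finset.Nat.antidiagonal_succ]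
    simp [Prod.map, Finset.sum_insert, PowerSeries.coeff_zero_eq_constantCoeff]
  have hmul0 : ∀ p q : PowerSeries A, c 0 (p * q) = c 0 p * c 0 q := by
    intro p q
    simp [hc, PowerSeries.coeff_zero_eq_constantCoeff, map_mul]
  have hXmul : ∀ p : PowerSeries A, c 1 (PowerSeries.X * p) = c 0 p :=
    fun p => PowerSeries.coeff_succ_X_mul (R := A) 0 p
  have hXassoc : PowerSeries.X * f * ψ * psDeriv ψ
      = PowerSeries.X * (f * ψ * psDeriv ψ) := by
    simp only [mul_assoc]
  have hd0 : c 0 (psDeriv f) = c 1 f := by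
    simp [hc, psDeriv]
  -- the lam term vanishes
  have hlam0 : c 0 lam = 0 := by rw [h1, hmul0, hmul0, hf0, zero_mul, zero_mul]
  have hlam1 : c 1 lam = c 1 f * c 0 g * c 0 ψ := by
    rw [h1, hmul1, hmul0, hmul1]
    simp [hf0]
  have hlψ1 : c 1 (lam * ψ) = 0 := by
    rw [hmul1, hlam0, hlam1, zero_mul, zero_add, mul_assoc, hψ0, mul_zero]
  have hlψ0 : c 0 (lam * ψ) = 0 := by rw [hmul0, hlam0, zero_mul]
  have hlamterm : c 1 (lam * ψ * g) = 0 := by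
    rw [hmul1, hlψ1, hlψ0, zero_mul, zero_mul, add_zero]
  -- coefficient 1 of h2
  have key := congrArg (c 1) h2
  rw [map_add, map_sub, hXmul, hXassoc, hXmul, hd0, hmul0, hmul0, hf0, zero_mul,
    zero_mul, sub_zero, hlamterm, add_zero, sq, hmul1, hmul0] at key
  simp only [hf0, zero_mul, mul_zero, zero_add, add_zero] at key
  -- key : c 1 f * (c 0 g * c 0 g) = c 1 f
  obtain ⟨u, hu⟩ := hf1
  have hk : (↑u⁻¹ : A) * (↑u * (c 0 g * c 0 g)) = ↑u⁻¹ * ↑u := by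
    rw [hu, key]
  rw [← mul_assoc, Units.inv_mul, one_mul] at hk
  rw [sq]
  exact hk
end

section
/- Let A be a supercommutative superalgebra. Let a, b, b' ∈ A₀ with a invertible and b² = 1, and let p, p', l ∈ A₁ with l·p = 0. Consider the even supermatrix of format 2|2 given in block form by M = [[P, Q],[R, S]] with blocks P = [[1, 0],[0, a]], Q = [[p, 0],[p', a·p]], R = [[0, 0],[0, l]], S = [[b, 0],[b', a·b]]. Then M is invertible and Ber M = 1, i.e. det(P − Q·S⁻¹·R)·det(S)⁻¹ = 1. -/
open Matrix

/-- let `a, b, b' ∈ A₀` with `a` invertible and `b² = 1`, and `p, p', l ∈ A₁`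
with `l * p = 0`. Then the even supermatrix of format `2|2`
`M = [[P,Q],[R,S]]` with `P = [[1,0],[0,a]]`, `Q = [[p,0],[p',a*p]]`, `R = [[0,0],[0,l]]`,
`S = [[b,0],[b',a*b]]` is invertible and `Ber M = det (P - Q * S⁻¹ * R) * (det S)⁻¹ = 1`. -/
theorem berezinian_ramond_change_of_basis {A : Type*} [Ring A] (S : SuperComm A)
    (a b b' p p' l : A)
    (ha : a ∈ S.even) (hb : b ∈ S.even) (hb' : b' ∈ S.even)
    (hp : p ∈ S.odd) (hp' : p' ∈ S.odd) (hl : l ∈ S.odd)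
    (hau : IsUnit a) (hbsq : b ^ 2 = 1) (hlp : l * p = 0) :
    IsUnit (Matrix.fromBlocks !![(1 : A), 0; 0, a] !![p, 0; p', a * p]
        !![(0 : A), 0; 0, l] !![b, 0; b', a * b]) ∧
    (S.res (!![(1 : A), 0; 0, a] -
          !![p, 0; p', a * p] * Ring.inverse !![b, 0; b', a * b] * !![(0 : A), 0; 0, l])).det *
        Ring.inverse ((S.res !![b, 0; b', a * b]).det) = 1 := by
  -- even elements are central
  have hc : ∀ x ∈ S.even, ∀ y : A, x * y = y * x := by
    intro x hx y
    obtain ⟨y₀, hy₀, y₁, hy₁, rfl⟩ := S.decompose y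
    rw [mul_add, add_mul, S.even_comm x hx y₀ hy₀, S.even_odd_comm x hx y₁ hy₁]
  have ce : ∀ x ∈ S.even, ∀ y z : A, y * (x * z) = x * (y * z) := by
    intro x hx y z
    rw [← mul_assoc, ← hc x hx y, mul_assoc]
  -- the inverse of a
  obtain ⟨u, hu⟩ := hau
  set ai : A := ↑u⁻¹ with hai_def
  have haai : a * ai = 1 := by rw [← hu]; exact u.mul_inv
  have haia : ai * a = 1 := by rw [← hu]; exact u.inv_mul
  have hai : ai ∈ S.even := by
    obtain ⟨e, he, o, ho, hdec⟩ := S.decompose ai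
    have hao : a * o = 0 := by
      refine S.indep _ ?_ (S.even_mul_odd a ha o ho)
      have h1 : a * e + a * o = 1 := by rw [← mul_add, ← hdec, haai]
      rw [eq_sub_of_add_eq' h1]
      exact sub_mem (S.even.one_mem) (S.even.mul_mem ha he)
    have ho0 : o = 0 := by
      have : ai * (a * o) = o := by rw [← mul_assoc, haia, one_mul]
      rw [hao, mul_zero] at this
      exact this.symm
    rw [hdec, ho0, add_zero]; exact he
  have hbb : b * b = 1 := by rw [← sq]; exact hbsq
  -- abbreviations
  set P : Matrix (Fin 2) (Fin 2) A := !![(1 : A), 0; 0, a] with hP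
  set Q : Matrix (Fin 2) (Fin 2) A := !![p, 0; p', a * p] with hQ
  set R : Matrix (Fin 2) (Fin 2) A := !![(0 : A), 0; 0, l] with hR
  set S' : Matrix (Fin 2) (Fin 2) A := !![b, 0; b', a * b] with hS'
  set T : Matrix (Fin 2) (Fin 2) A := !![b, 0; -(ai * b'), ai * b] with hT
  set Pi : Matrix (Fin 2) (Fin 2) A := !![(1 : A), 0; 0, ai] with hPi
  -- scalar facts
  have F2 : b' * b + -(a * b * (ai * b')) = 0 := by
    have : a * b * (ai * b') = b' * b := by
      rw [mul_assoc, ce ai hai b b', ← mul_assoc, haai, one_mul, hc b hb b']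
    rw [this, add_neg_cancel]
  have F3 : a * b * (ai * b) = 1 := by
    rw [mul_assoc, ce ai hai b b, ← mul_assoc, haai, one_mul, hbb]
  have F4 : -(ai * b' * b) + ai * b * b' = 0 := by
    rw [mul_assoc ai b' b, hc b' hb' b, mul_assoc ai b b', neg_add_cancel]
  have F5 : ai * b * (a * b) = 1 := by
    rw [mul_assoc, ce a ha b b, ← mul_assoc, haia, one_mul, hbb]
  have hpl : p * l = 0 := by rw [S.odd_anticomm p hp l hl, hlp, neg_zero]
  -- matrix identities
  have h1 : S' * T = 1 := by
    rw [hS', hT]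
    ext i j
    fin_cases i <;> fin_cases j <;>
      simp [Matrix.mul_apply, Fin.sum_univ_two, hbb, F2, F3]
  have h2 : T * S' = 1 := by
    rw [hS', hT]
    ext i j
    fin_cases i <;> fin_cases j <;>
      simp [Matrix.mul_apply, Fin.sum_univ_two, hbb, F4, F5]
  have h3 : P * Pi = 1 := by
    rw [hP, hPi]
    ext i j
    fin_cases i <;> fin_cases j <;>
      simp [Matrix.mul_apply, Fin.sum_univ_two, haai]
  have h4 : Pi * P = 1 := by
    rw [hP, hPi]
    ext i j
    fin_cases i <;> fin_cases j <;>
      simp [Matrix.mul_apply, Fin.sum_univ_two, haia]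
  have h5 : Q * T * R = 0 := by
    have key : a * p * (ai * b * l) = 0 := by
      rw [mul_assoc ai b l, mul_assoc, ce ai hai p (b * l), ← mul_assoc, haai, one_mul,
        ce b hb p l, hpl, mul_zero]
    rw [hQ, hT, hR, Matrix.mul_assoc]
    ext i j
    fin_cases i <;> fin_cases j <;>
      simp [Matrix.mul_apply, Fin.sum_univ_two, key]
  -- units
  let u1 : (Matrix (Fin 2 ⊕ Fin 2) (Fin 2 ⊕ Fin 2) A)ˣ :=
    ⟨Matrix.fromBlocks 1 (Q * T) 0 1, Matrix.fromBlocks 1 (-(Q * T)) 0 1,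
      by simp [Matrix.fromBlocks_multiply, Matrix.fromBlocks_one],
      by simp [Matrix.fromBlocks_multiply, Matrix.fromBlocks_one]⟩
  let u2 : (Matrix (Fin 2 ⊕ Fin 2) (Fin 2 ⊕ Fin 2) A)ˣ :=
    ⟨Matrix.fromBlocks P 0 0 S', Matrix.fromBlocks Pi 0 0 T,
      by simp [Matrix.fromBlocks_multiply, Matrix.fromBlocks_one, h1, h3],
      by simp [Matrix.fromBlocks_multiply, Matrix.fromBlocks_one, h2, h4]⟩
  let u3 : (Matrix (Fin 2 ⊕ Fin 2) (Fin 2 ⊕ Fin 2) A)ˣ :=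
    ⟨Matrix.fromBlocks 1 0 (T * R) 1, Matrix.fromBlocks 1 0 (-(T * R)) 1,
      by simp [Matrix.fromBlocks_multiply, Matrix.fromBlocks_one],
      by simp [Matrix.fromBlocks_multiply, Matrix.fromBlocks_one]⟩
  have hfact : Matrix.fromBlocks P Q R S' =
      (u1 * u2 * u3).val := by
    show Matrix.fromBlocks P Q R S' =
      Matrix.fromBlocks 1 (Q * T) 0 1 * Matrix.fromBlocks P 0 0 S' *
        Matrix.fromBlocks 1 0 (T * R) 1
    simp only [Matrix.fromBlocks_multiply, Matrix.one_mul, Matrix.mul_one, Matrix.mul_zero,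
      Matrix.zero_mul, add_zero, zero_add]
    rw [Matrix.mul_assoc Q T S', h2, Matrix.mul_one]
    rw [← Matrix.mul_assoc S' T R, h1, Matrix.one_mul]
    rw [← Matrix.mul_assoc Q T R, h5, add_zero]
  let uS : (Matrix (Fin 2) (Fin 2) A)ˣ := ⟨S', T, h1, h2⟩
  have hinvS : Ring.inverse S' = T := Ring.inverse_unit uS
  constructor
  · rw [hfact]; exact (u1 * u2 * u3).isUnit
  · rw [hinvS, h5, sub_zero]
    -- now compute the determinants over S.even
    have hab : a * b ∈ S.even := S.even.mul_mem ha hb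
    have d1 : (S.res P).det = ⟨a, ha⟩ := by
      rw [hP]
      simp [SuperComm.res, Matrix.det_fin_two, S.even.one_mem, S.even.zero_mem, ha]
    have hba : b * (a * b) = a := by rw [ce a ha b b, hbb, mul_one]
    have d2 : (S.res S').det = ⟨a, ha⟩ := by
      rw [hS']
      simp [SuperComm.res, Matrix.det_fin_two, hb, hb', hab, S.even.zero_mem]
      refine Subtype.ext ?_
      show b * (a * b) - 0 = a
      rw [sub_zero, hba]
    rw [d1, d2]
    have ua : IsUnit (⟨a, ha⟩ : S.even) := by
      refine ⟨⟨⟨a, ha⟩, ⟨ai, hai⟩, ?_, ?_⟩, rfl⟩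
      · exact Subtype.ext haai
      · exact Subtype.ext haia
    exact Ring.mul_inverse_cancel _ ua
end
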